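/- Let Λ be a K-stone finite-dimensional K-algebra, let S and T be bricks in mod Λ such that S ⊔ T[1] is a semibrick pair, and let f : T ↪ S be a monomorphism. Then coker(f) is a brick, dim_K Hom_Λ(S, coker f) = 1, and Hom_Λ(T, coker f) = 0 = Hom_Λ(coker f, T). -/

import Mathlib

open CategoryTheory

attribute [local instance] HasDerivedCategory.standard

namespace CategoryTheory.Triangulated

open Limits Pretriangulated

/-- Triangulated subcategory (the Mathlib structure of December 2024, since removed). -/
structure Subcategory (C : Type*) [Category C] [HasZeroObject C] [HasShift C ℤ]
    [Preadditive C] [∀ n : ℤ, (shiftFunctor C n).Additive] [Pretriangulated C] where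
  P : C → Prop
  zero' : ∃ (Z : C) (_ : IsZero Z), P Z
  shift (X : C) (n : ℤ) : P X → P (X⟦n⟧)
  ext₂' (T : Triangle C) (_ : T ∈ distTriang C) : P T.obj₁ → P T.obj₃ →
    ∃ (Y : C) (_ : P Y), Nonempty (T.obj₂ ≅ Y)

end CategoryTheory.Triangulated

namespace Paper

variable (K Λ : Type) [Field K] [Ring Λ] [Algebra K Λ] [FiniteDimensional K Λ]

/-- A brick: a finite module whose endomorphism ring is a division ring. -/
def IsBrick (S : ModuleCat.{0} Λ) : Prop :=
  Module.Finite Λ S ∧ Nontrivial S ∧ ∀ f : S →ₗ[Λ] S, f ≠ 0 → Function.Bijective f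

/-- Hom_Λ(A,B) = 0. -/
def NoHom (A B : ModuleCat.{0} Λ) : Prop := ∀ f : A →ₗ[Λ] B, f = 0

/-- Ext¹_Λ(A,B) = 0 : every short exact sequence 0 → B → E → A → 0 splits. -/
def Ext1Vanish (A B : ModuleCat.{0} Λ) : Prop :=
  ∀ (E : ModuleCat.{0} Λ) (i : B →ₗ[Λ] E) (p : E →ₗ[Λ] A),
    Function.Injective i → Function.Surjective p → LinearMap.range i = LinearMap.ker p →
    ∃ s : A →ₗ[Λ] E, p.comp s = LinearMap.id

/-- A semibrick: a set of bricks which are pairwise hom-orthogonal. -/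
def IsSemibrick (D : Set (ModuleCat.{0} Λ)) : Prop :=
  (∀ S ∈ D, IsBrick Λ S) ∧ ∀ S ∈ D, ∀ T ∈ D, S ≠ T → NoHom Λ S T ∧ NoHom Λ T S

/-- A semibrick pair `D ⊔ U[1]`. -/
def IsSemibrickPair (D U : Set (ModuleCat.{0} Λ)) : Prop :=
  IsSemibrick Λ D ∧ IsSemibrick Λ U ∧
    ∀ S ∈ D, ∀ T ∈ U, NoHom Λ S T ∧ Ext1Vanish Λ S T

/-- `Y` is a direct summand (retract) of `X`. -/
def IsRetractOf {C : Type*} [Category C] (Y X : C) : Prop :=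
  ∃ (s : Y ⟶ X) (r : X ⟶ Y), s ≫ r = 𝟙 Y

/-- `D ⊔ U[1]` is a 2-term simple minded collection: it is a semibrick pair and the
smallest triangulated subcategory of `D^b(mod Λ)` (realized as the objects of the derived
category of `Mod Λ` with bounded, finitely generated homology) containing
`{S : S ∈ D} ∪ {T[1] : T ∈ U}` and closed under direct summands is all of `D^b(mod Λ)`. -/
def IsTwoTermSMC (D U : Set (ModuleCat.{0} Λ)) : Prop :=
  IsSemibrickPair Λ D U ∧
  ∀ (S : Triangulated.Subcategory (DerivedCategory (ModuleCat.{0} Λ))),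
    (∀ X Y, S.P X → IsRetractOf Y X → S.P Y) →
    (∀ M ∈ D, S.P ((DerivedCategory.singleFunctor (ModuleCat.{0} Λ) 0).obj M)) →
    (∀ M ∈ U, S.P (((DerivedCategory.singleFunctor (ModuleCat.{0} Λ) 0).obj M)⟦(1:ℤ)⟧)) →
    ∀ Z : DerivedCategory (ModuleCat.{0} Λ),
      (∃ a b : ℤ, ∀ n : ℤ, (n < a ∨ b < n) →
        Subsingleton ((DerivedCategory.homologyFunctor (ModuleCat.{0} Λ) n).obj Z)) →
      (∀ n : ℤ, Module.Finite Λ ((DerivedCategory.homologyFunctor (ModuleCat.{0} Λ) n).obj Z)) →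
      S.P Z

/-- `D ⊆ D'` up to isomorphism. -/
def SubsetUpToIso (D D' : Set (ModuleCat.{0} Λ)) : Prop :=
  ∀ S ∈ D, ∃ S' ∈ D', Nonempty (S ≅ S')

/-- The semibrick pair `D ⊔ U[1]` is completable. -/
def Completable (D U : Set (ModuleCat.{0} Λ)) : Prop :=
  ∃ D' U', IsTwoTermSMC Λ D' U' ∧ SubsetUpToIso Λ D D' ∧ SubsetUpToIso Λ U U'

/-- The semibrick pair `D ⊔ U[1]` is pairwise completable. -/
def PairwiseCompletable (D U : Set (ModuleCat.{0} Λ)) : Prop :=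
  ∀ S ∈ D, ∀ T ∈ U, ∃ D' U', IsTwoTermSMC Λ D' U' ∧
    (∃ S' ∈ D', Nonempty (S ≅ S')) ∧ (∃ T' ∈ U', Nonempty (T ≅ T'))

/-- `Λ` has the pairwise 2-simple minded completability property. -/
def PairwiseCompletabilityProperty : Prop :=
  ∀ D U : Set (ModuleCat.{0} Λ), IsSemibrickPair Λ D U →
    PairwiseCompletable Λ D U → Completable Λ D U

/-- `Λ` is τ-tilting finite: only finitely many bricks up to isomorphism. -/
def TauTiltingFinite : Prop :=
  ∃ (n : ℕ) (f : Fin n → ModuleCat.{0} Λ),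
    ∀ M : ModuleCat.{0} Λ, IsBrick Λ M → ∃ i, Nonempty (M ≅ f i)

/-- `rk Λ = n` : there are exactly `n` isomorphism classes of simple `Λ`-modules. -/
def AlgebraRank (n : ℕ) : Prop :=
  ∃ f : Fin n → ModuleCat.{0} Λ,
    (∀ i, IsSimpleModule Λ (f i)) ∧
    (∀ i j, i ≠ j → ¬ Nonempty (f i ≅ f j)) ∧
    (∀ M : ModuleCat.{0} Λ, IsSimpleModule Λ M → ∃ i, Nonempty (M ≅ f i))

/-- `X` belongs to `Filt(C)` : it has a finite filtration whose subquotients are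
isomorphic to members of `C`. -/
def FiltClass (C : Set (ModuleCat.{0} Λ)) (X : ModuleCat.{0} Λ) : Prop :=
  ∃ (n : ℕ) (c : Fin (n + 1) → Submodule Λ X),
    c 0 = ⊥ ∧ c (Fin.last n) = ⊤ ∧ (∀ i : Fin n, c i.castSucc ≤ c i.succ) ∧
    ∀ i : Fin n, ∃ Z ∈ C,
      Nonempty ((↥(c i.succ) ⧸ (Submodule.comap (c i.succ).subtype (c i.castSucc))) ≃ₗ[Λ] Z)

/-- `X ∈ Filt(S)` for a single module `S`. -/
def IsFiltBy (S X : ModuleCat.{0} Λ) : Prop := FiltClass Λ {S} X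

/-- `f : T → A` is a minimal left `Filt(S)`-approximation. -/
def IsMinimalLeftFiltApprox (S T A : ModuleCat.{0} Λ) (f : T →ₗ[Λ] A) : Prop :=
  IsFiltBy Λ S A ∧
  (∀ N : ModuleCat.{0} Λ, IsFiltBy Λ S N → ∀ j : T →ₗ[Λ] N,
      ∃ h : A →ₗ[Λ] N, h.comp f = j) ∧
  (∀ h : A →ₗ[Λ] A, h.comp f = f → Function.Bijective h)

/-- The semibrick pair `D ⊔ U[1]` is singly left mutation compatible at `S ∈ D`. -/
def SinglyLeftCompatAt (D U : Set (ModuleCat.{0} Λ)) (S : ModuleCat.{0} Λ) : Prop :=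
  S ∈ D ∧ ∀ T ∈ U, ∃ (A : ModuleCat.{0} Λ) (g : T →ₗ[Λ] A),
    IsMinimalLeftFiltApprox Λ S T A g ∧ (Function.Injective g ∨ Function.Surjective g)

/-- The short exact sequence `0 → A → E → T → 0` (with `A ∈ Filt S`) corresponds to the
minimal left `Filt(S)`-approximation `T[-1] → A` in `D^b(mod Λ)` : every extension of `T`
by a module of `Filt(S)` is a pushout of it, and it is left minimal. -/
def IsMinimalExtApprox (S T A E : ModuleCat.{0} Λ) (i : A →ₗ[Λ] E) (p : E →ₗ[Λ] T) : Prop :=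
  IsFiltBy Λ S A ∧ Function.Injective i ∧ Function.Surjective p ∧
    LinearMap.range i = LinearMap.ker p ∧
  (∀ (N F : ModuleCat.{0} Λ) (j : N →ₗ[Λ] F) (q : F →ₗ[Λ] T), IsFiltBy Λ S N →
      Function.Injective j → Function.Surjective q → LinearMap.range j = LinearMap.ker q →
      ∃ (h : A →ₗ[Λ] N) (φ : E →ₗ[Λ] F), j.comp h = φ.comp i ∧ q.comp φ = p) ∧
  (∀ h : A →ₗ[Λ] A,
      (∃ φ : E →ₗ[Λ] E, i.comp h = φ.comp i ∧ p.comp φ = p) → Function.Bijective h)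

/-- `D' ⊔ U'[1]` is the left mutation `μ_S^+(D ⊔ U[1])` of the semibrick pair `D ⊔ U[1]`
at `S ∈ D`. -/
def IsLeftMutation (S : ModuleCat.{0} Λ) (D U D' U' : Set (ModuleCat.{0} Λ)) : Prop :=
  SinglyLeftCompatAt Λ D U S ∧
  (∀ R : ModuleCat.{0} Λ, R ∈ D' ↔
    ((∃ T ∈ D, T ≠ S ∧ ∃ (A : ModuleCat.{0} Λ) (i : A →ₗ[Λ] R) (p : R →ₗ[Λ] T),
        IsMinimalExtApprox Λ S T A R i p) ∨
     (∃ T ∈ U, ∃ (A : ModuleCat.{0} Λ) (g : T →ₗ[Λ] A),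
        IsMinimalLeftFiltApprox Λ S T A g ∧ Function.Injective g ∧ ¬ Function.Surjective g ∧
        Nonempty (R ≅ ModuleCat.of Λ (A ⧸ LinearMap.range g))))) ∧
  (∀ R : ModuleCat.{0} Λ, R ∈ U' ↔
    (Nonempty (R ≅ S) ∨
     ∃ T ∈ U, ∃ (A : ModuleCat.{0} Λ) (g : T →ₗ[Λ] A),
        IsMinimalLeftFiltApprox Λ S T A g ∧ Function.Surjective g ∧ ¬ Function.Injective g ∧
        Nonempty (R ≅ ModuleCat.of Λ (LinearMap.ker g))))

/-- One left mutation step between semibrick pairs. -/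
def MutStep (X Y : Set (ModuleCat.{0} Λ) × Set (ModuleCat.{0} Λ)) : Prop :=
  ∃ S : ModuleCat.{0} Λ, IsLeftMutation Λ S X.1 X.2 Y.1 Y.2

/-- The semibrick pair `D ⊔ U[1]` is mutation compatible. -/
def MutationCompatible (D U : Set (ModuleCat.{0} Λ)) : Prop :=
  U = ∅ ∨ ∃ U' : Set (ModuleCat.{0} Λ),
    Relation.ReflTransGen (MutStep Λ) (D, U) (∅, U')

/-- `S` is a `K`-stone: a brick with `End(S) ≅ K` and no self-extensions. -/
def IsKStone (S : ModuleCat.{0} Λ) : Prop :=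
  IsBrick Λ S ∧ (∀ f : S →ₗ[Λ] S, ∃ c : K, ∀ x : S, f x = (algebraMap K Λ c) • x) ∧
    Ext1Vanish Λ S S

/-- `Λ` is a `K`-stone algebra. -/
def KStoneAlgebra : Prop := ∀ S : ModuleCat.{0} Λ, IsBrick Λ S → IsKStone K Λ S

/-- `dim_K Hom_Λ(T,A) = 1`. -/
def HomDimOne (T A : ModuleCat.{0} Λ) : Prop :=
  ∃ f : T →ₗ[Λ] A, f ≠ 0 ∧
    ∀ g : T →ₗ[Λ] A, ∃ c : K, ∀ x : T, g x = (algebraMap K Λ c) • f x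

/-- A wide subcategory of `mod Λ` : a class of finite modules closed under isomorphism,
kernels, cokernels and extensions. -/
def IsWide (W : Set (ModuleCat.{0} Λ)) : Prop :=
  (∀ M ∈ W, Module.Finite Λ M) ∧
  (∀ M ∈ W, ∀ N : ModuleCat.{0} Λ, Nonempty (M ≅ N) → N ∈ W) ∧
  (∀ M ∈ W, ∀ N ∈ W, ∀ f : M →ₗ[Λ] N, ModuleCat.of Λ (LinearMap.ker f) ∈ W) ∧
  (∀ M ∈ W, ∀ N ∈ W, ∀ f : M →ₗ[Λ] N, ModuleCat.of Λ (N ⧸ LinearMap.range f) ∈ W) ∧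
  (∀ (A E B : ModuleCat.{0} Λ), A ∈ W → B ∈ W → Module.Finite Λ E →
    ∀ (i : A →ₗ[Λ] E) (p : E →ₗ[Λ] B), Function.Injective i → Function.Surjective p →
      LinearMap.range i = LinearMap.ker p → E ∈ W)

/-- A simple object of the wide subcategory `W`. -/
def IsWSimple (W : Set (ModuleCat.{0} Λ)) (M : ModuleCat.{0} Λ) : Prop :=
  M ∈ W ∧ Nontrivial M ∧
    ∀ N : Submodule Λ M, ModuleCat.of Λ N ∈ W → N = ⊥ ∨ N = ⊤

/-- The wide subcategory `W` has rank `n`: it has exactly `n` isomorphism classes of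
simple objects. -/
def WideRank (W : Set (ModuleCat.{0} Λ)) (n : ℕ) : Prop :=
  ∃ f : Fin n → ModuleCat.{0} Λ,
    (∀ i, IsWSimple Λ W (f i)) ∧
    (∀ i j, i ≠ j → ¬ Nonempty (f i ≅ f j)) ∧
    (∀ M : ModuleCat.{0} Λ, IsWSimple Λ W M → ∃ i, Nonempty (M ≅ f i))

/-- The smallest wide subcategory containing a class `C` of modules. -/
def smallestWide (C : Set (ModuleCat.{0} Λ)) : Set (ModuleCat.{0} Λ) :=
  {M | ∀ W : Set (ModuleCat.{0} Λ), IsWide Λ W → C ⊆ W → M ∈ W}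

/-- `X ∈ Fac(C)` : `X` is a quotient of a finite direct sum of members of `C`. -/
def FacClass (C : Set (ModuleCat.{0} Λ)) (X : ModuleCat.{0} Λ) : Prop :=
  ∃ (n : ℕ) (f : Fin n → ModuleCat.{0} Λ), (∀ i, f i ∈ C) ∧
    ∃ p : ((i : Fin n) → f i) →ₗ[Λ] X, Function.Surjective p

/-- `X ∈ Sub(C)` : `X` is a submodule of a finite direct sum of members of `C`. -/
def SubClass (C : Set (ModuleCat.{0} Λ)) (X : ModuleCat.{0} Λ) : Prop :=
  ∃ (n : ℕ) (f : Fin n → ModuleCat.{0} Λ), (∀ i, f i ∈ C) ∧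
    ∃ j : X →ₗ[Λ] ((i : Fin n) → f i), Function.Injective j

/-- An indecomposable module. -/
def Indec (M : ModuleCat.{0} Λ) : Prop :=
  Nontrivial M ∧ ∀ N₁ N₂ : Submodule Λ M, IsCompl N₁ N₂ → N₁ = ⊥ ∨ N₂ = ⊥


/-- over a `K`-stone algebra, for a semibrick pair `S ⊔ T[1]` and a
monomorphism `f : T ↪ S`, the cokernel of `f` is a brick, `dim_K Hom(S, coker f) = 1`,
and `Hom(T, coker f) = 0 = Hom(coker f, T)`. -/
theorem coker_of_mono (hK : KStoneAlgebra K Λ)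
    (S T : ModuleCat.{0} Λ) (h : IsSemibrickPair Λ {S} {T})
    (f : T →ₗ[Λ] S) (hf : Function.Injective f) :
    IsBrick Λ (ModuleCat.of Λ (S ⧸ LinearMap.range f)) ∧
    HomDimOne K Λ S (ModuleCat.of Λ (S ⧸ LinearMap.range f)) ∧
    NoHom Λ T (ModuleCat.of Λ (S ⧸ LinearMap.range f)) ∧
    NoHom Λ (ModuleCat.of Λ (S ⧸ LinearMap.range f)) T := by
  classical
  obtain ⟨hD, hU, hDU⟩ := h
  have hSbrick : IsBrick Λ S := hD.1 S rfl
  have hTbrick : IsBrick Λ T := hU.1 T rfl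
  have hST : NoHom Λ S T := (hDU S rfl T rfl).1
  have hExtST : Ext1Vanish Λ S T := (hDU S rfl T rfl).2
  haveI hTnt : Nontrivial T := hTbrick.2.1
  haveI hSfin : Module.Finite Λ S := hSbrick.1
  set N : Submodule Λ S := LinearMap.range f with hN
  let p : S →ₗ[Λ] (S ⧸ N) := N.mkQ
  have hpsurj : Function.Surjective p := Submodule.mkQ_surjective N
  have hp0 : ∀ y : S, p y = 0 ↔ y ∈ N := fun y => by
    simp only [p, Submodule.mkQ_apply, Submodule.Quotient.mk_eq_zero]
  have hpker : ∀ t : T, p (f t) = 0 := fun t => (hp0 _).mpr (hN ▸ ⟨t, rfl⟩)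
  -- the cokernel is nonzero
  have hNlt : N < ⊤ := by
    rcases (le_top : N ≤ ⊤).lt_or_eq with h' | h'
    · exact h'
    · exfalso
      rw [hN] at h'
      have hbij : Function.Bijective f := ⟨hf, LinearMap.range_eq_top.mp h'⟩
      let e := LinearEquiv.ofBijective f hbij
      obtain ⟨t, ht⟩ := exists_ne (0 : T)
      have h0 : e.symm.toLinearMap = 0 := hST e.symm.toLinearMap
      have h1 : e.symm (f t) = t := by
        have := e.symm_apply_apply t
        rwa [LinearEquiv.ofBijective_apply] at this
      have h2 : e.symm (f t) = 0 := by
        have := LinearMap.congr_fun h0 (f t)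
        simpa using this
      exact ht (h1.symm.trans h2)
  haveI hQnt : Nontrivial (S ⧸ N) := Submodule.Quotient.nontrivial_iff.mpr hNlt.ne
  haveI hQfin : Module.Finite Λ (S ⧸ N) := Module.Finite.of_surjective p hpsurj
  -- KEY : every map S → S ⧸ N is a scalar multiple of p
  have key : ∀ γ : S →ₗ[Λ] (S ⧸ N), ∃ c : K, ∀ x : S,
      γ x = (algebraMap K Λ c) • p x := by
    intro γ
    let φ : (S × S) →ₗ[Λ] (S ⧸ N) :=
      γ.comp (LinearMap.fst Λ S S) - p.comp (LinearMap.snd Λ S S)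
    let P : Submodule Λ (S × S) := LinearMap.ker φ
    have hmem : ∀ x : S × S, x ∈ P ↔ γ x.1 = p x.2 := fun x => by
      simp only [P, φ, LinearMap.mem_ker, LinearMap.sub_apply, LinearMap.coe_comp,
        Function.comp_apply, LinearMap.fst_apply, LinearMap.snd_apply, sub_eq_zero]
    let i : T →ₗ[Λ] P := LinearMap.codRestrict P (LinearMap.prod 0 f) (by
      intro t
      rw [hmem]
      simp [hpker t])
    let pr : P →ₗ[Λ] S := (LinearMap.fst Λ S S).comp P.subtype
    have hiinj : Function.Injective i := by
      intro a b hab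
      apply hf
      have := congrArg (fun z : P => (z : S × S).2) hab
      simpa [i] using this
    have hprsurj : Function.Surjective pr := by
      intro s
      obtain ⟨s₂, hs₂⟩ := hpsurj (γ s)
      exact ⟨⟨(s, s₂), (hmem _).mpr hs₂.symm⟩, rfl⟩
    have hrk : LinearMap.range i = LinearMap.ker pr := by
      ext x
      constructor
      · rintro ⟨t, rfl⟩
        simp [pr, i, LinearMap.mem_ker]
      · intro hx
        have hx1 : (x : S × S).1 = 0 := hx
        have hx2 : p (x : S × S).2 = 0 := by
          have h3 := (hmem _).mp x.2
          rw [hx1, map_zero] at h3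
          exact h3.symm
        obtain ⟨t, ht⟩ : (x : S × S).2 ∈ LinearMap.range f := hN ▸ (hp0 _).mp hx2
        refine ⟨t, ?_⟩
        apply Subtype.ext
        apply Prod.ext
        · simpa [i] using hx1.symm
        · simpa [i] using ht
    obtain ⟨σ, hσ⟩ := hExtST (ModuleCat.of Λ P) i pr hiinj hprsurj hrk
    let σ' : S →ₗ[Λ] P := σ
    let ψ : S →ₗ[Λ] S := ((LinearMap.snd Λ S S).comp P.subtype).comp σ
    obtain ⟨c, hc⟩ := (hK S hSbrick).2.1 ψ
    refine ⟨c, fun x => ?_⟩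
    have hx1 : ((σ' x : S × S)).1 = x := LinearMap.congr_fun hσ x
    have hx2 : γ x = p (((σ' x : S × S)).2) := by
      have h3 := (hmem _).mp (σ' x).2
      rwa [hx1] at h3
    have hx3 : ((σ' x : S × S)).2 = ψ x := rfl
    rw [hx2, hx3, hc x, map_smul]
  -- p ≠ 0
  have hpne : p ≠ 0 := by
    obtain ⟨y, hy⟩ := exists_ne (0 : S ⧸ N)
    obtain ⟨s, rfl⟩ := hpsurj y
    intro h0
    exact hy (by rw [h0]; simp)
  -- the cokernel is a brick
  have hQbrick : IsBrick Λ (ModuleCat.of Λ (S ⧸ N)) := by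
    refine ⟨hQfin, hQnt, ?_⟩
    intro φ hφ
    obtain ⟨c, hc⟩ := key (φ.comp p)
    have hcall : ∀ s : S, φ (p s) = (algebraMap K Λ c) • p s := fun s => hc s
    have hcne : c ≠ 0 := by
      intro h0
      apply hφ
      refine LinearMap.ext fun y => ?_
      obtain ⟨s, rfl⟩ := hpsurj y
      have h3 := hcall s
      rw [h0] at h3
      simpa using h3
    have hφall : ∀ y : S ⧸ N, φ y = (algebraMap K Λ c) • y := by
      intro y
      obtain ⟨s, rfl⟩ := hpsurj y
      exact hcall s
    constructor
    · intro y₁ y₂ hy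
      rw [hφall, hφall] at hy
      have h4 := congrArg (fun z => (algebraMap K Λ c⁻¹) • z) hy
      simpa [smul_smul, ← map_mul, inv_mul_cancel₀ hcne] using h4
    · intro y
      refine ⟨(algebraMap K Λ c⁻¹) • y, ?_⟩
      rw [hφall, smul_smul, ← map_mul, mul_inv_cancel₀ hcne]
      simp
  -- Hom(coker, T) = 0
  have hQT : NoHom Λ (ModuleCat.of Λ (S ⧸ N)) T := by
    intro g
    have h0 : g.comp p = 0 := hST (g.comp p)
    refine LinearMap.ext fun y => ?_
    obtain ⟨s, rfl⟩ := hpsurj y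
    simpa using LinearMap.congr_fun h0 s
  -- Hom(T, coker) = 0
  have hTQ : NoHom Λ T (ModuleCat.of Λ (S ⧸ N)) := by
    intro g
    let g' : T →ₗ[Λ] (S ⧸ N) := g
    let M : Submodule Λ (S × (S ⧸ N)) := LinearMap.range (LinearMap.prod f (-g'))
    let inr : (S ⧸ N) →ₗ[Λ] ((S × (S ⧸ N)) ⧸ M) := M.mkQ.comp (LinearMap.inr Λ S (S ⧸ N))
    let inl : S →ₗ[Λ] ((S × (S ⧸ N)) ⧸ M) := M.mkQ.comp (LinearMap.inl Λ S (S ⧸ N))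
    have hker : ∀ x : S × (S ⧸ N), M.mkQ x = 0 ↔ ∃ t : T, f t = x.1 ∧ -(g' t) = x.2 := by
      intro x
      rw [Submodule.mkQ_apply, Submodule.Quotient.mk_eq_zero]
      constructor
      · rintro ⟨t, ht⟩
        exact ⟨t, congrArg Prod.fst ht, congrArg Prod.snd ht⟩
      · rintro ⟨t, h1, h2⟩
        exact ⟨t, Prod.ext h1 h2⟩
    let q : ((S × (S ⧸ N)) ⧸ M) →ₗ[Λ] (S ⧸ N) :=
      M.liftQ (p.comp (LinearMap.fst Λ S (S ⧸ N))) (by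
        rintro x ⟨t, rfl⟩
        simpa using hpker t)
    have hq : ∀ x : S × (S ⧸ N), q (M.mkQ x) = p x.1 := fun x => by
      simp [q, Submodule.mkQ_apply, Submodule.liftQ_apply]
    have hinrinj : Function.Injective inr := by
      intro a b hab
      have h3 : inr (a - b) = 0 := by rw [map_sub, hab, sub_self]
      have h0 : M.mkQ ((0 : S), a - b) = 0 := h3
      obtain ⟨t, h1, h2⟩ := (hker _).mp h0
      have ht0 : t = 0 := hf (by simpa using h1)
      rw [ht0] at h2
      have h4 : a - b = 0 := by simpa using h2.symm
      exact sub_eq_zero.mp h4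
    have hqsurj : Function.Surjective q := by
      intro y
      obtain ⟨s, rfl⟩ := hpsurj y
      exact ⟨M.mkQ (s, 0), hq (s, 0)⟩
    have hrng : LinearMap.range inr = LinearMap.ker q := by
      ext z
      constructor
      · rintro ⟨y, rfl⟩
        have : q (inr y) = p 0 := hq (0, y)
        simpa [LinearMap.mem_ker] using this
      · intro hz
        obtain ⟨x, rfl⟩ := Submodule.mkQ_surjective M z
        have hz0 : p x.1 = 0 := (hq x).symm.trans (LinearMap.mem_ker.mp hz)
        obtain ⟨t, ht⟩ : x.1 ∈ LinearMap.range f := hN ▸ (hp0 _).mp hz0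
        refine ⟨x.2 + g' t, ?_⟩
        show M.mkQ ((0 : S), x.2 + g' t) = M.mkQ x
        rw [Submodule.mkQ_apply, Submodule.mkQ_apply, Submodule.Quotient.eq]
        refine ⟨-t, ?_⟩
        apply Prod.ext
        · simp [ht]
        · simp
    obtain ⟨σ, hσ⟩ := (hK (ModuleCat.of Λ (S ⧸ N)) hQbrick).2.2
      (ModuleCat.of Λ ((S × (S ⧸ N)) ⧸ M)) inr q hinrinj hqsurj hrng
    let σ' : (S ⧸ N) →ₗ[Λ] ((S × (S ⧸ N)) ⧸ M) := σ
    let δ : S →ₗ[Λ] ((S × (S ⧸ N)) ⧸ M) := inl - σ'.comp p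
    have hδ : ∀ s : S, δ s ∈ LinearMap.range inr := by
      intro s
      rw [hrng, LinearMap.mem_ker]
      have h1 : q (inl s) = p s := hq (s, 0)
      have h2 : q (σ (p s)) = p s := LinearMap.congr_fun hσ (p s)
      simp only [δ, LinearMap.sub_apply, LinearMap.coe_comp, Function.comp_apply, map_sub, h1]
      rw [show q (σ' (p s)) = p s from h2, sub_self]
    let e := LinearEquiv.ofInjective inr hinrinj
    let γ : S →ₗ[Λ] (S ⧸ N) :=
      e.symm.toLinearMap.comp (δ.codRestrict (LinearMap.range inr) hδ)
    have hγ : ∀ s : S, inr (γ s) = δ s := by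
      intro s
      have h1 : e (γ s) = ⟨δ s, hδ s⟩ := by
        show e (e.symm ⟨δ s, hδ s⟩) = _
        exact e.apply_symm_apply _
      have h2 : ((e (γ s) : LinearMap.range inr) : ((S × (S ⧸ N)) ⧸ M)) = inr (γ s) :=
        LinearEquiv.ofInjective_apply inr (γ s)
      rw [← h2, h1]
    obtain ⟨c, hc⟩ := key γ
    ext t
    have h1 : δ (f t) = inl (f t) := by simp [δ, hpker t]
    have h2 : inr (γ (f t)) = 0 := by
      rw [hc (f t), hpker t, smul_zero, map_zero]
    have h3 : inl (f t) = 0 := by rw [← h1, ← hγ (f t), h2]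
    have h4 : M.mkQ ((f t : S), (0 : S ⧸ N)) = 0 := h3
    obtain ⟨t', h5, h6⟩ := (hker _).mp h4
    have ht' : t' = t := hf h5
    rw [ht'] at h6
    have h7 : g' t = 0 := neg_eq_zero.mp h6
    exact h7
  exact ⟨hQbrick, ⟨p, hpne, key⟩, hTQ, hQT⟩

end Paper
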